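/- Let f be a parameterization, F a rectangular parameterization set, and σ a (possibly partial) policy of the MDP M. Then f satisfies the formula Φ(F, σ) := dom(F) ∧ ⋀_{s ∈ S, σ(s) ≠ ⊥} φ^act_{s,σ(s)} if and only if f ∈ F and for every state s ∈ S with σ(s) ≠ ⊥ it holds that σ(s) = σ_{𝒫(f)}(s). -/

import Mathlib

namespace Paper6

/-- A decision tree for an MDP whose states are valuations of the variables in `Var`:
leaves carry actions from `A`, inner nodes carry a state predicate `v ≤ b`
(a variable `v : Var` together with an integer bound `b`); the left subtree
corresponds to states satisfying the predicate, the right subtree to the others. -/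
inductive DT (Var A : Type) : Type
  | leaf (a : A)
  | node (v : Var) (b : ℤ) (l r : DT Var A)

variable {Var A : Type}

/-- Evaluation of a decision tree on a state (valuation): follow the predicates
from the root to a leaf and return the leaf's action. -/
def DT.eval : DT Var A → (Var → ℤ) → A
  | .leaf a, _ => a
  | .node v b l r, s => if s v ≤ b then l.eval s else r.eval s

/-- Depth of a decision tree. -/
def DT.depth : DT Var A → ℕ
  | .leaf _ => 0
  | .node _ _ l r => max l.depth r.depth + 1

/-- `t.IsLeafAt π` holds iff the path `π` (list of booleans; `true` = go left)
leads from the root of `t` to a leaf. -/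
def DT.IsLeafAt : DT Var A → List Bool → Prop
  | .leaf _, [] => True
  | .node _ _ l _, true :: p => l.IsLeafAt p
  | .node _ _ _ r, false :: p => r.IsLeafAt p
  | _, _ => False

/-- The set of states (within the state space `X`) corresponding to the node of the
tree reached by path `π`: the root corresponds to all of `X`, the left child of a node
to the states of the node satisfying its predicate, and the right child to those
not satisfying it.  Invalid paths correspond to `∅`. -/
def DT.statesAt : DT Var A → Set (Var → ℤ) → List Bool → Set (Var → ℤ)
  | _, X, [] => X
  | .node v b l _, X, true :: p => l.statesAt {s ∈ X | s v ≤ b} p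
  | .node v b _ r, X, false :: p => r.statesAt {s ∈ X | ¬ s v ≤ b} p
  | .leaf _, _, _ :: _ => ∅

open Classical in
/-- The policy induced by a decision tree: play the action of the leaf the state is
routed to if it is available (`Av s` is the set of available actions in state `s`),
and otherwise fall back to the random action `astar`. -/
noncomputable def inducedPolicy (Av : (Var → ℤ) → Set A) (astar : A)
    (t : DT Var A) (s : Var → ℤ) : A :=
  if t.eval s ∈ Av s then t.eval s else astar

/-- The skeleton (topology) of a binary tree: the underlying tree `T` of a tree
template, forgetting all labels. -/
inductive Skel : Type
  | leaf
  | node (l r : Skel)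

/-- `sk.IsInnerAt π` holds iff the path `π` (`true` = left) leads from the root
to an inner node of the skeleton. -/
def Skel.IsInnerAt : Skel → List Bool → Prop
  | .node _ _, [] => True
  | .node l _, true :: p => l.IsInnerAt p
  | .node _ r, false :: p => r.IsInnerAt p
  | _, _ => False

/-- `sk.IsLeafAt π` holds iff the path `π` leads from the root to a leaf
of the skeleton. -/
def Skel.IsLeafAt : Skel → List Bool → Prop
  | .leaf, [] => True
  | .node l _, true :: p => l.IsLeafAt p
  | .node _ r, false :: p => r.IsLeafAt p
  | _, _ => False

/-- A parameterization `f = (δ̂, β, α̂)` of a tree template: a variable-selection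
function, a bound-selection function (on inner nodes, addressed by root-to-node
paths) and an action-selection function (on leaves). -/
structure Param (Var A : Type) where
  dvar : List Bool → Var
  bound : List Bool → ℤ
  act : List Bool → A

/-- The decision tree `𝒫(f)` instantiated from the skeleton by the
parameterization `f`: the inner node at address `p` carries the predicate
`v_{δ̂(p)} ≤ β(p)`, the leaf at address `p` carries the action `α̂(p)`. -/
def Skel.build : Skel → Param Var A → List Bool → DT Var A
  | .leaf, f, p => .leaf (f.act p)
  | .node l r, f, p =>
      .node (f.dvar p) (f.bound p) (l.build f (p ++ [true])) (r.build f (p ++ [false]))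

/-- A rectangular set of parameterizations `F`: for each inner node a set of allowed
variables and a set of allowed bounds, and for each leaf a set of allowed actions. -/
structure FamSet (Var A : Type) where
  dvarS : List Bool → Set Var
  boundS : List Bool → Set ℤ
  actS : List Bool → Set A

/-- `f ∈ F`: the parameterization `f` belongs to the rectangular set `F`
(equivalently, `f` satisfies the formula `dom(F)`). -/
def memF (sk : Skel) (F : FamSet Var A) (f : Param Var A) : Prop :=
  (∀ p, sk.IsInnerAt p → f.dvar p ∈ F.dvarS p ∧ f.bound p ∈ F.boundS p) ∧
  (∀ p, sk.IsLeafAt p → f.act p ∈ F.actS p)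

/-- For a root-to-node path, the list of (proper prefix, direction taken) pairs:
the inner nodes visited along the path together with the direction in which
the path continues. -/
def pathSteps : List Bool → List (List Bool × Bool)
  | [] => []
  | d :: p => ([], d) :: (pathSteps p).map fun q => (d :: q.1, q.2)

/-- The relation `▷` used in the selection formula: `≤` when the path goes left,
`>` when it goes right. -/
def dirRel : Bool → ℤ → ℤ → Prop
  | true, x, b => x ≤ b
  | false, x, b => x > b

/-- The selection formula `φ^sel_{s,n}` (with the parameterization `f` substituted
for the variables `δ̂_n, β_n`): state `s` is routed along the path `n`, i.e. at every
inner node on the path the value of the selected variable satisfies the required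
inequality. -/
def phiSel (f : Param Var A) (s : Var → ℤ) (n : List Bool) : Prop :=
  ∀ q ∈ pathSteps n, dirRel q.2 (s (f.dvar q.1)) (f.bound q.1)

/-- The action-choice formula `φ^act_{s,a,n}` (with `f` substituted): the leaf `n`
selects action `a`; for the random action `a = α*` the leaf may also select any
action unavailable in `s`. -/
def phiActAt (Av : (Var → ℤ) → Set A) (astar : A) (f : Param Var A)
    (s : Var → ℤ) (a : A) (n : List Bool) : Prop :=
  (a = astar ∧ (f.act n = astar ∨ f.act n ∉ Av s)) ∨ (a ≠ astar ∧ f.act n = a)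

/-- The action-choice formula `φ^act_{s,a}` (with `f` substituted): every leaf to
which `s` is routed selects action `a` in the sense of `φ^act_{s,a,n}`. -/
def phiAct (sk : Skel) (Av : (Var → ℤ) → Set A) (astar : A) (f : Param Var A)
    (s : Var → ℤ) (a : A) : Prop :=
  ∀ n, sk.IsLeafAt n → phiSel f s n → phiActAt Av astar f s a n

/-- The leaf path chosen by the instantiated tree on state `s` (relative path,
with `p` the absolute address of the current subtree's root). -/
def selPath (f : Param Var A) : Skel → (Var → ℤ) → List Bool → List Bool
  | .leaf, _, _ => []
  | .node l r, s, p =>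
      if s (f.dvar p) ≤ f.bound p then true :: selPath f l s (p ++ [true])
      else false :: selPath f r s (p ++ [false])

lemma eval_build (f : Param Var A) (sk : Skel) (s : Var → ℤ) (p : List Bool) :
    (sk.build f p).eval s = f.act (p ++ selPath f sk s p) := by
  induction sk generalizing p with
  | leaf => simp [Skel.build, DT.eval, selPath]
  | node l r ihl ihr =>
      simp only [Skel.build, DT.eval, selPath]
      split_ifs with h
      · rw [ihl]; simp
      · rw [ihr]; simp

lemma isLeafAt_selPath (f : Param Var A) (sk : Skel) (s : Var → ℤ) (p : List Bool) :
    sk.IsLeafAt (selPath f sk s p) := by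
  induction sk generalizing p with
  | leaf => simp [selPath, Skel.IsLeafAt]
  | node l r ihl ihr =>
      simp only [selPath]
      split_ifs with h
      · exact ihl _
      · exact ihr _

/-- Generalized selection formula, relative to the absolute address `p`. -/
def phiSelGen (f : Param Var A) (s : Var → ℤ) (p n : List Bool) : Prop :=
  ∀ q ∈ pathSteps n, dirRel q.2 (s (f.dvar (p ++ q.1))) (f.bound (p ++ q.1))

lemma phiSelGen_nil (f : Param Var A) (s : Var → ℤ) (p : List Bool) :
    phiSelGen f s p [] := by
  intro q hq; simp [pathSteps] at hq

lemma phiSelGen_cons (f : Param Var A) (s : Var → ℤ) (p : List Bool) (d : Bool)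
    (n : List Bool) :
    phiSelGen f s p (d :: n) ↔
      dirRel d (s (f.dvar p)) (f.bound p) ∧ phiSelGen f s (p ++ [d]) n := by
  constructor
  · intro h
    refine ⟨by simpa using h ([], d) List.mem_cons_self, ?_⟩
    intro q hq
    have := h (d :: q.1, q.2)
      (List.mem_cons_of_mem _ (List.mem_map_of_mem (f := fun q : List Bool × Bool => (d :: q.1, q.2)) hq))
    have hap : p ++ d :: q.1 = (p ++ [d]) ++ q.1 := by
      rw [List.append_assoc]; rfl
    rw [hap] at this
    exact this
  · rintro ⟨h1, h2⟩ q hq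
    rcases List.mem_cons.1 hq with rfl | hq
    · simpa using h1
    · obtain ⟨r, hr, rfl⟩ := List.mem_map.1 hq
      have := h2 r hr
      have hap : p ++ d :: r.1 = (p ++ [d]) ++ r.1 := by
        rw [List.append_assoc]; rfl
      show dirRel r.2 (s (f.dvar (p ++ d :: r.1))) (f.bound (p ++ d :: r.1))
      rw [hap]
      exact this

lemma phiSelGen_selPath (f : Param Var A) (sk : Skel) (s : Var → ℤ) (p : List Bool) :
    phiSelGen f s p (selPath f sk s p) := by
  induction sk generalizing p with
  | leaf => exact phiSelGen_nil f s p
  | node l r ihl ihr =>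
      simp only [selPath]
      split_ifs with h
      · exact (phiSelGen_cons ..).2 ⟨h, ihl _⟩
      · exact (phiSelGen_cons ..).2 ⟨by simpa [dirRel] using h, ihr _⟩

lemma selPath_unique (f : Param Var A) (sk : Skel) (s : Var → ℤ) (p : List Bool)
    (m : List Bool) (hm : sk.IsLeafAt m) (hsel : phiSelGen f s p m) :
    m = selPath f sk s p := by
  induction sk generalizing p m with
  | leaf =>
      cases m with
      | nil => rfl
      | cons d m => simp [Skel.IsLeafAt] at hm
  | node l r ihl ihr =>
      cases m with
      | nil => simp [Skel.IsLeafAt] at hm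
      | cons d m =>
          rw [phiSelGen_cons] at hsel
          cases d with
          | true =>
              have h : s (f.dvar p) ≤ f.bound p := hsel.1
              simp only [selPath, if_pos h]
              exact congrArg _ (ihl _ m hm hsel.2)
          | false =>
              have h : ¬ s (f.dvar p) ≤ f.bound p := by
                have := hsel.1; simp only [dirRel, gt_iff_lt] at this; omega
              simp only [selPath, if_neg h]
              exact congrArg _ (ihr _ m hm hsel.2)

/-- **Theorem 1.** Let `S` be the state space of the MDP (with available
actions `Av` and random action `astar` available everywhere), `F` a rectangular
parameterization set over the skeleton `sk`, and `σ` a partial policy.  A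
parameterization `f` satisfies the formula
`Φ(F, σ) = dom(F) ∧ ⋀_{s ∈ S, σ(s) ≠ ⊥} φ^act_{s,σ(s)}`
iff `f ∈ F` and the policy induced by `𝒫(f)` agrees with `σ` on every state
where `σ` is defined. -/
theorem sat_phi_iff_implements {Var A : Type}
    (S : Set (Var → ℤ)) (Av : (Var → ℤ) → Set A) (astar : A)
    (hstar : ∀ s, astar ∈ Av s)
    (sk : Skel) (F : FamSet Var A) (f : Param Var A)
    (σ : (Var → ℤ) → Option A)
    (hσ : ∀ s ∈ S, ∀ a, σ s = some a → a ∈ Av s) :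
    (memF sk F f ∧ ∀ s ∈ S, ∀ a, σ s = some a → phiAct sk Av astar f s a) ↔
      (memF sk F f ∧ ∀ s ∈ S, ∀ a, σ s = some a →
        inducedPolicy Av astar (sk.build f []) s = a) := by
  have key : ∀ s ∈ S, ∀ a, σ s = some a →
      (phiAct sk Av astar f s a ↔ inducedPolicy Av astar (sk.build f []) s = a) := by
    intro s hs a ha
    have haAv : a ∈ Av s := hσ s hs a ha
    set n := selPath f sk s [] with hn
    have heval : (sk.build f []).eval s = f.act n := by
      rw [eval_build]; rfl
    have hleaf : sk.IsLeafAt n := isLeafAt_selPath f sk s []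
    have hselgen : phiSelGen f s [] n := phiSelGen_selPath f sk s []
    have hsel : phiSel f s n := hselgen
    constructor
    · intro h
      have hact := h n hleaf hsel
      unfold inducedPolicy
      rw [heval]
      rcases hact with ⟨h1, h2 | h2⟩ | ⟨h1, h2⟩
      · subst h1; rw [h2]; simp [hstar s]
      · subst h1; rw [if_neg h2]
      · rw [h2, if_pos haAv]
    · intro h m hmleaf hmsel
      have hm : m = n := selPath_unique f sk s [] m hmleaf hmsel
      rw [hm]
      unfold inducedPolicy at h
      rw [heval] at h
      by_cases hcase : a = astar
      · subst hcase
        left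
        refine ⟨rfl, ?_⟩
        by_cases hAv : f.act n ∈ Av s
        · left; rw [if_pos hAv] at h; exact h
        · right; exact hAv
      · right
        refine ⟨hcase, ?_⟩
        by_cases hAv : f.act n ∈ Av s
        · rw [if_pos hAv] at h; exact h
        · rw [if_neg hAv] at h; exact absurd h.symm hcase
  constructor
  · rintro ⟨hF, h⟩
    exact ⟨hF, fun s hs a ha => (key s hs a ha).1 (h s hs a ha)⟩
  · rintro ⟨hF, h⟩
    exact ⟨hF, fun s hs a ha => (key s hs a ha).2 (h s hs a ha)⟩

end Paper6
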